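/- Let d ≥ 2 and let F ⊆ ℝ^{d-1} be a compact convex set with (d-1)-dimensional Lebesgue measure 1. Let K ⊆ ℝ^d be a compact convex set with floor F, Vol_d(K) = 1, and K ⊆ F × [0,H] for some H ≥ 0. Then Q_K(2) = 1 − (1/d)·∫_F G_K(z)² dz, where G_K(z) = sup{ y : (z,y) ∈ K } is the top function of K on F. -/

import Mathlib

open MeasureTheory Set Metric Pointwise ENNReal

noncomputable section

/-- The floor `F ⊆ ℝ^m` embedded into `ℝ^{m+1}` at height `0`, i.e. `F × {0}`. -/
def floorEmb (m : ℕ) (F : Set (Fin m → ℝ)) : Set (Fin (m + 1) → ℝ) :=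
  (fun z => Fin.snoc z (0 : ℝ)) '' F

/-- `K ⊆ ℝ^{m+1}` has floor `F ⊆ ℝ^m`: it lies in the upper half-space and its
intersection with the hyperplane `x_{last} = 0` is `F × {0}`. -/
def HasFloor (m : ℕ) (F : Set (Fin m → ℝ)) (K : Set (Fin (m + 1) → ℝ)) : Prop :=
  K ⊆ {x | 0 ≤ x (Fin.last m)} ∧ K ∩ {x | x (Fin.last m) = 0} = floorEmb m F

/-- `Q_K(2)`: the probability that two independent uniform points `U₁, U₂` of `K`
both lie on the boundary of the convex hull of `{U₁, U₂} ∪ (F × {0})`. -/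
def Qtwo (m : ℕ) (F : Set (Fin m → ℝ)) (K : Set (Fin (m + 1) → ℝ)) : ℝ :=
  (((volume.restrict K).prod (volume.restrict K))
    {p : (Fin (m + 1) → ℝ) × (Fin (m + 1) → ℝ) |
      p.1 ∈ frontier (convexHull ℝ ({p.1, p.2} ∪ floorEmb m F)) ∧
      p.2 ∈ frontier (convexHull ℝ ({p.1, p.2} ∪ floorEmb m F))}).toReal

/-- `L_K(t)`: the `m`-dimensional Lebesgue measure of the horizontal slice of `K`
at height `t`. -/
def layerVol (m : ℕ) (K : Set (Fin (m + 1) → ℝ)) (t : ℝ) : ℝ :=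
  (volume {z : Fin m → ℝ | Fin.snoc z t ∈ K}).toReal

/-- `K ⊆ ℝ^{m+1}` is a sub-prism over `F`: it is contained in `F × [0, H]` for some `H ≥ 0`. -/
def IsSubPrism (m : ℕ) (F : Set (Fin m → ℝ)) (K : Set (Fin (m + 1) → ℝ)) : Prop :=
  ∃ H : ℝ, 0 ≤ H ∧ K ⊆ {x | Fin.init x ∈ F ∧ x (Fin.last m) ∈ Set.Icc 0 H}

variable {V : Type*} [NormedAddCommGroup V] [NormedSpace ℝ V]

lemma interior_convexHull_insert {S : Set V} (hS : S.Nonempty) (v0 : V) (hv0 : v0 ≠ 0) (x : V) :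
    x ∈ interior (convexHull ℝ (insert x S)) ↔ x ∈ interior (convexHull ℝ S) := by
  constructor
  · intro hx
    rw [mem_interior_iff_mem_nhds, Metric.mem_nhds_iff] at hx
    obtain ⟨ε, hε, hball⟩ := hx
    have hballc : ball x ε ⊆ convexHull ℝ (insert x S) := hball
    -- key claim
    have key : ∀ u : V, u ≠ 0 → ‖u‖ < ε → ∃ t : ℝ, 1 ≤ t ∧ x + t • u ∈ convexHull ℝ S := by
      intro u hu hlt
      have hxu : x + u ∈ convexHull ℝ (insert x S) := by
        apply hballc
        simp [dist_eq_norm, hlt]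
      rw [convexHull_insert hS, mem_convexJoin] at hxu
      obtain ⟨a, ha, c, hc, hseg⟩ := hxu
      rw [mem_singleton_iff] at ha
      rw [ha] at hseg
      obtain ⟨s, t, hs, ht, hst, habc⟩ := hseg
      have hts : t • (c - x) = u := by
        have hs1 : s = 1 - t := by linarith
        rw [smul_sub]
        rw [hs1] at habc
        have : (1 - t) • x + t • c = x + u := habc
        rw [sub_smul, one_smul] at this
        linear_combination (norm := module) this
      have ht0 : t ≠ 0 := by
        rintro rfl; apply hu; rw [← hts, zero_smul]
      have htpos : 0 < t := lt_of_le_of_ne ht (Ne.symm ht0)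
      refine ⟨t⁻¹, ?_, ?_⟩
      · rw [one_le_inv_iff₀]; exact ⟨htpos, by linarith⟩
      · have hcx : c = x + t⁻¹ • u := by
          rw [← hts, smul_smul, inv_mul_cancel₀ ht0, one_smul]
          abel
        rw [← hcx]; exact hc
    -- x itself lies in the hull of S
    set u0 : V := (ε / 2 / ‖v0‖) • v0 with hu0def
    have hv0n : 0 < ‖v0‖ := norm_pos_iff.2 hv0
    have hu0 : u0 ≠ 0 := by
      simp only [hu0def, ne_eq, smul_eq_zero, not_or]
      exact ⟨by positivity, hv0⟩
    have hu0norm : ‖u0‖ = ε / 2 := by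
      rw [hu0def, norm_smul, Real.norm_eq_abs, abs_of_pos (by positivity)]
      field_simp
    have hu0lt : ‖u0‖ < ε := by rw [hu0norm]; linarith
    obtain ⟨t₁, ht₁, hc₁⟩ := key u0 hu0 hu0lt
    obtain ⟨t₂, ht₂, hc₂⟩ := key (-u0) (neg_ne_zero.2 hu0) (by rwa [norm_neg])
    have hxS : x ∈ convexHull ℝ S := by
      have hsum : 0 < t₁ + t₂ := by linarith
      have := (convex_convexHull ℝ S) hc₁ hc₂
        (le_of_lt (by positivity : (0:ℝ) < t₂ / (t₁ + t₂)))
        (le_of_lt (by positivity : (0:ℝ) < t₁ / (t₁ + t₂)))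
        (by rw [← add_div, add_comm t₂ t₁]; exact div_self (ne_of_gt hsum))
      convert this using 1
      match_scalars <;> field_simp <;> ring
    -- ball x (ε/2) ⊆ hull S
    have hball2 : ball x (ε / 2) ⊆ convexHull ℝ S := by
      intro y hy
      rcases eq_or_ne y x with rfl | hne
      · exact hxS
      · set u := y - x with hu
        have hune : u ≠ 0 := sub_ne_zero.2 hne
        have hult : ‖u‖ < ε := by
          have h2 : ‖u‖ < ε / 2 := by
            rw [hu, ← dist_eq_norm]
            exact mem_ball.1 hy
          linarith
        obtain ⟨t, ht1, hc⟩ := key u hune hult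
        have htpos : 0 < t := by linarith
        have hti : 0 < t⁻¹ := by positivity
        have hti1 : t⁻¹ ≤ 1 := by
          rw [inv_le_one_iff₀]; right; exact ht1
        have hmem := (convex_convexHull ℝ S) hxS hc
          (by linarith : (0:ℝ) ≤ 1 - t⁻¹) (le_of_lt hti) (by ring)
        have ht0' : t ≠ 0 := ne_of_gt htpos
        have hyeq : y = (1 - t⁻¹) • x + t⁻¹ • (x + t • u) := by
          have h2 : y = x + u := by rw [hu]; abel
          rw [h2]
          match_scalars <;> field_simp <;> try ring
        rw [hyeq]; exact hmem
    rw [mem_interior_iff_mem_nhds]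
    exact Filter.mem_of_superset (Metric.ball_mem_nhds x (by linarith)) hball2
  · intro hx
    exact interior_mono (convexHull_mono (subset_insert x S)) hx

namespace Aux
variable {m : ℕ} {F : Set (Fin m → ℝ)} {K : Set (Fin (m+1) → ℝ)}

/-- snoc · 0 as a linear map -/
def snocL (m : ℕ) : (Fin m → ℝ) →ₗ[ℝ] (Fin (m+1) → ℝ) where
  toFun z := Fin.snoc z 0
  map_add' a b := by
    funext i
    refine Fin.lastCases ?_ (fun j => ?_) i <;> simp
  map_smul' c a := by
    funext i
    refine Fin.lastCases ?_ (fun j => ?_) i <;> simp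

lemma floorEmb_eq : floorEmb m F = (snocL m) '' F := rfl

lemma floorEmb_convex (hF : Convex ℝ F) : Convex ℝ (floorEmb m F) := by
  rw [floorEmb_eq]; exact hF.linear_image (snocL m)

lemma floorEmb_compact (hF : IsCompact F) : IsCompact (floorEmb m F) := by
  rw [floorEmb_eq]
  exact hF.image (snocL m).continuous_of_finiteDimensional

lemma convexHull_floorEmb (hF : Convex ℝ F) :
    convexHull ℝ (floorEmb m F) = floorEmb m F :=
  (floorEmb_convex hF).convexHull_eq

lemma floorEmb_nonempty (hF : F.Nonempty) : (floorEmb m F).Nonempty := hF.image _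

def cone (F : Set (Fin m → ℝ)) (p : Fin (m+1) → ℝ) : Set (Fin (m+1) → ℝ) :=
  convexHull ℝ (insert p (floorEmb m F))

lemma cone_mem_iff (hFne : F.Nonempty) (hFconv : Convex ℝ F) {p q : Fin (m+1) → ℝ} :
    q ∈ cone F p ↔ ∃ t ∈ Icc (0:ℝ) 1, ∃ w ∈ F,
      q = t • p + (1 - t) • (Fin.snoc w 0 : Fin (m+1) → ℝ) := by
  rw [cone, convexHull_insert (floorEmb_nonempty hFne), mem_convexJoin]
  constructor
  · rintro ⟨a, ha, b, hb, hseg⟩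
    rw [mem_singleton_iff] at ha
    rw [ha] at hseg
    rw [convexHull_floorEmb hFconv] at hb
    obtain ⟨w, hw, rfl⟩ := hb
    obtain ⟨u, v, hu, hv, huv, habc⟩ := hseg
    exact ⟨u, ⟨hu, by linarith⟩, w, hw, by rw [← habc, show (1:ℝ) - u = v by linarith]⟩
  · rintro ⟨t, ⟨ht0, ht1⟩, w, hw, rfl⟩
    refine ⟨p, mem_singleton p, Fin.snoc w 0, ?_, t, 1 - t, ht0, by linarith, by ring, rfl⟩
    rw [convexHull_floorEmb hFconv]
    exact ⟨w, hw, rfl⟩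

lemma cone_subset (hKconv : Convex ℝ K) (hF0K : floorEmb m F ⊆ K) {p : Fin (m+1) → ℝ}
    (hp : p ∈ K) : cone F p ⊆ K :=
  convexHull_min (insert_subset hp hF0K) hKconv

lemma cone_last_le (hFne : F.Nonempty) (hFconv : Convex ℝ F) {p q : Fin (m+1) → ℝ}
    (hpl : 0 ≤ p (Fin.last m)) (hq : q ∈ cone F p) : q (Fin.last m) ≤ p (Fin.last m) := by
  obtain ⟨t, ⟨ht0, ht1⟩, w, hw, rfl⟩ := (cone_mem_iff hFne hFconv).1 hq
  have h1 : (t • p + (1 - t) • (Fin.snoc w 0 : Fin (m+1) → ℝ)) (Fin.last m)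
      = t * p (Fin.last m) + (1 - t) * (Fin.snoc w 0 : Fin (m+1) → ℝ) (Fin.last m) := rfl
  rw [h1, Fin.snoc_last]
  nlinarith

def coneMap (p : Fin (m+1) → ℝ) : ℝ × (Fin m → ℝ) → (Fin (m+1) → ℝ) :=
  fun tw => tw.1 • p + (1 - tw.1) • (Fin.snoc tw.2 0 : Fin (m+1) → ℝ)

lemma coneMap_continuous (p : Fin (m+1) → ℝ) : Continuous (coneMap p) := by
  unfold coneMap
  have h1 : Continuous fun tw : ℝ × (Fin m → ℝ) => (Fin.snoc tw.2 0 : Fin (m+1) → ℝ) :=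
    (snocL m).continuous_of_finiteDimensional.comp continuous_snd
  exact (continuous_fst.smul continuous_const).add
    ((continuous_const.sub continuous_fst).smul h1)

lemma cone_eq_image (hFne : F.Nonempty) (hFconv : Convex ℝ F) (p : Fin (m+1) → ℝ) :
    cone F p = coneMap p '' (Icc (0:ℝ) 1 ×ˢ F) := by
  ext q
  rw [cone_mem_iff hFne hFconv]
  constructor
  · rintro ⟨t, ht, w, hw, rfl⟩
    exact ⟨(t, w), ⟨ht, hw⟩, rfl⟩
  · rintro ⟨⟨t, w⟩, ⟨ht, hw⟩, rfl⟩
    exact ⟨t, ht, w, hw, rfl⟩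

lemma cone_compact (hFne : F.Nonempty) (hFconv : Convex ℝ F) (hFcomp : IsCompact F)
    (p : Fin (m+1) → ℝ) : IsCompact (cone F p) := by
  rw [cone_eq_image hFne hFconv]
  exact (isCompact_Icc.prod hFcomp).image (coneMap_continuous p)

lemma cone_convex (p : Fin (m+1) → ℝ) : Convex ℝ (cone F p) := convex_convexHull ℝ _

end Aux

namespace Aux2
open Aux
variable {m : ℕ} {F : Set (Fin m → ℝ)} {K : Set (Fin (m+1) → ℝ)}

/-- the closed approximants to the interior-membership event -/
def Cset (F : Set (Fin m → ℝ)) (n : ℕ) : Set ((Fin (m+1) → ℝ) × (Fin (m+1) → ℝ)) :=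
  {pq | ∀ v ∈ closedBall (0 : Fin (m+1) → ℝ) (1/(n+1)), pq.2 + v ∈ cone F pq.1}

lemma isClosed_Cset (hFne : F.Nonempty) (hFconv : Convex ℝ F) (hFcomp : IsCompact F)
    (n : ℕ) : IsClosed (Cset F n) := by
  apply IsSeqClosed.isClosed
  intro u x hu hx
  intro v hv
  -- representations
  have hrep : ∀ k : ℕ, ∃ tw : ℝ × (Fin m → ℝ), tw ∈ Icc (0:ℝ) 1 ×ˢ F ∧
      (u k).2 + v = coneMap (u k).1 tw := by
    intro k
    have := hu k v hv
    rw [cone_eq_image hFne hFconv] at this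
    obtain ⟨tw, htw, heq⟩ := this
    exact ⟨tw, htw, heq.symm⟩
  choose tw htw heq using hrep
  have hcomp : IsCompact (Icc (0:ℝ) 1 ×ˢ F) := isCompact_Icc.prod hFcomp
  obtain ⟨tw0, htw0, φ, hφ, htend⟩ := hcomp.tendsto_subseq htw
  have hp : Filter.Tendsto (fun k => (u (φ k)).1) Filter.atTop (nhds x.1) :=
    ((continuous_fst.tendsto x).comp hx).comp hφ.tendsto_atTop
  have hq : Filter.Tendsto (fun k => (u (φ k)).2) Filter.atTop (nhds x.2) :=
    ((continuous_snd.tendsto x).comp hx).comp hφ.tendsto_atTop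
  have ht1 : Filter.Tendsto (fun k => (tw (φ k)).1) Filter.atTop (nhds tw0.1) :=
    (continuous_fst.tendsto tw0).comp htend
  have ht2 : Filter.Tendsto (fun k => (tw (φ k)).2) Filter.atTop (nhds tw0.2) :=
    (continuous_snd.tendsto tw0).comp htend
  have hlim1 : Filter.Tendsto (fun k => (u (φ k)).2 + v) Filter.atTop (nhds (x.2 + v)) :=
    hq.add tendsto_const_nhds
  have hlim2 : Filter.Tendsto (fun k => coneMap (u (φ k)).1 (tw (φ k))) Filter.atTop
      (nhds (coneMap x.1 tw0)) := by
    unfold coneMap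
    have hsnoc : Filter.Tendsto (fun k => (Fin.snoc (tw (φ k)).2 0 : Fin (m+1) → ℝ))
        Filter.atTop (nhds (Fin.snoc tw0.2 0 : Fin (m+1) → ℝ)) := by
      have : Continuous fun z : Fin m → ℝ => (Fin.snoc z 0 : Fin (m+1) → ℝ) :=
        (snocL m).continuous_of_finiteDimensional
      exact (this.tendsto _).comp ht2
    exact (ht1.smul hp).add ((tendsto_const_nhds.sub ht1).smul hsnoc)
  have heq' : x.2 + v = coneMap x.1 tw0 := by
    apply tendsto_nhds_unique hlim1
    have : (fun k => (u (φ k)).2 + v) = fun k => coneMap (u (φ k)).1 (tw (φ k)) := by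
      funext k; exact heq (φ k)
    rw [this]; exact hlim2
  rw [cone_eq_image hFne hFconv]
  exact ⟨tw0, htw0, heq'.symm⟩

lemma mem_interior_cone_iff (hFne : F.Nonempty) (hFconv : Convex ℝ F)
    {p q : Fin (m+1) → ℝ} :
    q ∈ interior (cone F p) ↔ ∃ n : ℕ, (p, q) ∈ Cset F n := by
  constructor
  · intro hq
    rw [mem_interior_iff_mem_nhds, Metric.mem_nhds_iff] at hq
    obtain ⟨ε, hε, hball⟩ := hq
    obtain ⟨n, hn⟩ := exists_nat_one_div_lt hε
    refine ⟨n, fun v hv => ?_⟩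
    apply hball
    rw [mem_ball, dist_eq_norm]
    have : ‖q + v - q‖ = ‖v‖ := by congr 1; abel
    rw [this]
    calc ‖v‖ ≤ 1/(n+1) := by simpa [dist_eq_norm] using hv
    _ < ε := by exact_mod_cast hn
  · rintro ⟨n, hn⟩
    rw [mem_interior_iff_mem_nhds, Metric.mem_nhds_iff]
    refine ⟨1/(n+1), by positivity, fun y hy => ?_⟩
    have := hn (y - q) (by
      rw [mem_closedBall, dist_eq_norm]
      have h2 : ‖y - q - 0‖ = ‖y - q‖ := by congr 1; abel
      rw [h2, ← dist_eq_norm]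
      exact le_of_lt (mem_ball.1 (by simpa [Metric.mem_ball] using hy)))
    simpa using this

end Aux2
namespace Aux3
variable {m : ℕ}

abbrev eqv (m : ℕ) : (Fin (m+1) → ℝ) ≃ᵐ ℝ × (Fin m → ℝ) :=
  MeasurableEquiv.piFinSuccAbove (fun _ => ℝ) (Fin.last m)

lemma eqv_symm_apply (y : ℝ) (z : Fin m → ℝ) : (eqv m).symm (y, z) = Fin.snoc z y := by
  have h : (eqv m).symm (y, z) = (Fin.insertNthEquiv (fun _ => ℝ) (Fin.last m)) (y, z) := by
    rw [MeasurableEquiv.piFinSuccAbove_symm_apply]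
  rw [h, Fin.insertNthEquiv_last]
  rfl

lemma mp_eqv : MeasurePreserving (eqv m) volume volume :=
  volume_preserving_piFinSuccAbove (fun _ => ℝ) (Fin.last m)

lemma slice_vol (s : Set (Fin (m+1) → ℝ)) (hs : MeasurableSet s) :
    volume s = ∫⁻ y : ℝ, volume {z : Fin m → ℝ | Fin.snoc z y ∈ s} := by
  have hpre : MeasurableSet ((eqv m).symm ⁻¹' s) := hs.preimage (eqv m).symm.measurable
  have h2 : volume ((eqv m).symm ⁻¹' s) = volume s :=
    ((mp_eqv (m := m)).symm (eqv m)).measure_preimage hs.nullMeasurableSet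
  rw [← h2, show (volume : Measure (ℝ × (Fin m → ℝ))) = (volume : Measure ℝ).prod volume from rfl,
    Measure.prod_apply hpre]
  congr 1
  ext y
  congr 1
  ext z
  simp only [mem_preimage, eqv_symm_apply, Set.mem_setOf_eq]

lemma meas_slice (s : Set (Fin (m+1) → ℝ)) (hs : MeasurableSet s) :
    Measurable fun y : ℝ => volume {z : Fin m → ℝ | Fin.snoc z y ∈ s} := by
  have hpre : MeasurableSet ((eqv m).symm ⁻¹' s) := hs.preimage (eqv m).symm.measurable
  have h : (fun y : ℝ => volume {z : Fin m → ℝ | Fin.snoc z y ∈ s})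
      = fun y => volume (Prod.mk y ⁻¹' ((eqv m).symm ⁻¹' s)) := by
    funext y
    congr 1
    ext z
    simp only [Set.mem_setOf_eq, mem_preimage, eqv_symm_apply]
  rw [h]
  exact measurable_measure_prodMk_left hpre

lemma meas_column (s : Set (Fin (m+1) → ℝ)) (hs : MeasurableSet s) :
    Measurable fun z : Fin m → ℝ => volume {y : ℝ | Fin.snoc z y ∈ s} := by
  have hcont : Continuous fun p : (Fin m → ℝ) × ℝ => (Fin.snoc p.1 p.2 : Fin (m+1) → ℝ) := by
    apply continuous_pi
    intro i
    refine Fin.lastCases ?_ (fun j => ?_) i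
    · simpa using continuous_snd
    · simp; exact (continuous_apply j).comp continuous_fst
  have hpre : MeasurableSet ((fun p : (Fin m → ℝ) × ℝ => (Fin.snoc p.1 p.2 : Fin (m+1) → ℝ)) ⁻¹' s) :=
    hs.preimage hcont.measurable
  have h : (fun z : Fin m → ℝ => volume {y : ℝ | Fin.snoc z y ∈ s})
      = fun z => volume (Prod.mk z ⁻¹' ((fun p : (Fin m → ℝ) × ℝ =>
          (Fin.snoc p.1 p.2 : Fin (m+1) → ℝ)) ⁻¹' s)) := by
    funext z; rfl
  rw [h]
  exact measurable_measure_prodMk_left hpre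

lemma lintegral_snoc (f : (Fin (m+1) → ℝ) → ℝ≥0∞) (hf : Measurable f) :
    ∫⁻ x, f x = ∫⁻ z : Fin m → ℝ, ∫⁻ y : ℝ, f (Fin.snoc z y) := by
  have h1 : ∫⁻ x, f x ∂(volume : Measure (Fin (m+1) → ℝ))
      = ∫⁻ p : ℝ × (Fin m → ℝ), f ((eqv m).symm p) :=
    (((mp_eqv (m := m)).symm (eqv m)).lintegral_comp hf).symm
  rw [h1, show (volume : Measure (ℝ × (Fin m → ℝ))) = (volume : Measure ℝ).prod volume from rfl,
    lintegral_prod_symm (fun p : ℝ × (Fin m → ℝ) => f ((eqv m).symm p))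
      ((hf.comp (eqv m).symm.measurable).aemeasurable)]
  simp only [eqv_symm_apply]

lemma vol_hyperplane (c : ℝ) : volume {x : Fin (m+1) → ℝ | x (Fin.last m) = c} = 0 := by
  have hmeas : MeasurableSet {x : Fin (m+1) → ℝ | x (Fin.last m) = c} :=
    measurableSet_eq_fun (measurable_pi_apply _) measurable_const
  rw [slice_vol _ hmeas]
  have hae : ∀ᵐ y : ℝ, volume {z : Fin m → ℝ | Fin.snoc z y ∈
      {x : Fin (m+1) → ℝ | x (Fin.last m) = c}} = 0 := by
    have hne : ∀ᵐ y : ℝ, y ≠ c := by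
      rw [ae_iff]
      simpa using measure_singleton c
    filter_upwards [hne] with y hy
    simp [Fin.snoc_last, hy]
  exact (lintegral_eq_zero_iff (meas_slice _ hmeas)).2 hae

end Aux3

namespace Aux4
variable {m : ℕ}

lemma lint_Icc_id {b : ℝ} (hb : 0 ≤ b) :
    ∫⁻ y in Icc (0:ℝ) b, ENNReal.ofReal y = ENNReal.ofReal (b^2/2) := by
  have hint : IntegrableOn (fun y : ℝ => y) (Icc (0:ℝ) b) volume :=
    continuous_id.integrableOn_Icc
  have h1 : ENNReal.ofReal (∫ y in Icc (0:ℝ) b, y) = ∫⁻ y in Icc (0:ℝ) b, ENNReal.ofReal y := by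
    apply ofReal_integral_eq_lintegral_ofReal hint
    filter_upwards [ae_restrict_mem measurableSet_Icc] with y hy
    exact hy.1
  rw [← h1]
  congr 1
  rw [integral_Icc_eq_integral_Ioc, ← intervalIntegral.integral_of_le hb]
  simpa using integral_id
  
lemma lint_Icc_pow {h : ℝ} (hh : 0 < h) :
    ∫⁻ y in Icc (0:ℝ) h, ENNReal.ofReal ((1 - y/h)^m) = ENNReal.ofReal (h/(m+1)) := by
  have hcont : Continuous fun y : ℝ => (1 - y/h)^m :=
    ((continuous_const.sub (continuous_id.div_const h)).pow m)
  have hint : IntegrableOn (fun y : ℝ => (1 - y/h)^m) (Icc (0:ℝ) h) volume :=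
    hcont.integrableOn_Icc
  have h1 : ENNReal.ofReal (∫ y in Icc (0:ℝ) h, (1 - y/h)^m)
      = ∫⁻ y in Icc (0:ℝ) h, ENNReal.ofReal ((1 - y/h)^m) := by
    apply ofReal_integral_eq_lintegral_ofReal hint
    filter_upwards [ae_restrict_mem measurableSet_Icc] with y hy
    have : 0 ≤ 1 - y/h := by
      rw [sub_nonneg, div_le_one hh]
      exact hy.2
    positivity
  rw [← h1]
  congr 1
  rw [integral_Icc_eq_integral_Ioc, ← intervalIntegral.integral_of_le hh.le]
  have hne : h ≠ 0 := ne_of_gt hh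
  have h2 : ∀ y : ℝ, (1 - y/h)^m = (h - y)^m / h^m := by
    intro y
    rw [← div_pow]
    congr 1
    field_simp
  simp_rw [h2]
  rw [intervalIntegral.integral_div]
  have h3 : ∫ y in (0:ℝ)..h, (h - y)^m = ∫ y in (0:ℝ)..h, y^m := by
    have := intervalIntegral.integral_comp_sub_left (a := (0:ℝ)) (b := h)
      (fun u : ℝ => u^m) h
    simpa using this
  rw [h3, integral_pow]
  have : (h^(m+1) - 0^(m+1)) = h^m * h := by
    rw [pow_succ]
    simp
  rw [this]
  field_simp

end Aux4

namespace Aux5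
open Aux Aux3 Aux4
variable {m : ℕ} {F : Set (Fin m → ℝ)}

lemma vol_affine_image (c : ℝ) (hc : 0 ≤ c) (b : Fin m → ℝ) (F : Set (Fin m → ℝ)) :
    volume ((fun w => c • w + b) '' F) = ENNReal.ofReal (c ^ m) * volume F := by
  have h1 : (fun w : Fin m → ℝ => c • w + b) '' F = (fun x => x + b) '' (c • F) := by
    rw [← Set.image_smul, Set.image_image]
  have h2 : (fun x : Fin m → ℝ => x + b) '' (c • F) = b +ᵥ (c • F) := by
    ext x
    constructor
    · rintro ⟨y, hy, rfl⟩; exact ⟨y, hy, by simp [vadd_eq_add]; abel⟩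
    · rintro ⟨y, hy, rfl⟩; exact ⟨y, hy, by simp [vadd_eq_add]; abel⟩
  rw [h1, h2, measure_vadd, Measure.addHaar_smul]
  congr 2
  rw [show Module.finrank ℝ (Fin m → ℝ) = m by simp]
  rw [abs_of_nonneg (by positivity)]

lemma vol_cone (hFne : F.Nonempty) (hFconv : Convex ℝ F) (hFcomp : IsCompact F)
    (hFvol : volume F = 1) {p : Fin (m+1) → ℝ} (hpl : 0 ≤ p (Fin.last m)) :
    volume (cone F p) = ENNReal.ofReal (p (Fin.last m) / (m+1)) := by
  set h := p (Fin.last m) with hdef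
  rcases eq_or_lt_of_le hpl with heq | hpos
  · -- degenerate cone: height zero
    have hsub : cone F p ⊆ {x : Fin (m+1) → ℝ | x (Fin.last m) = 0} := by
      intro q hq
      obtain ⟨t, ⟨ht0, ht1⟩, w, hw, rfl⟩ := (cone_mem_iff hFne hFconv).1 hq
      show (t • p + (1 - t) • (Fin.snoc w 0 : Fin (m+1) → ℝ)) (Fin.last m) = 0
      have : (t • p + (1 - t) • (Fin.snoc w 0 : Fin (m+1) → ℝ)) (Fin.last m)
          = t * p (Fin.last m) + (1 - t) * (Fin.snoc w 0 : Fin (m+1) → ℝ) (Fin.last m) := rfl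
      rw [this, Fin.snoc_last, ← hdef, ← heq]
      ring
    have h0 : volume (cone F p) = 0 :=
      measure_mono_null hsub (vol_hyperplane 0)
    rw [h0, ← heq]
    simp
  · -- positive height
    have hne : h ≠ 0 := ne_of_gt hpos
    rw [slice_vol _ (cone_compact hFne hFconv hFcomp p).isClosed.measurableSet]
    have hslice : ∀ y : ℝ, {z : Fin m → ℝ | Fin.snoc z y ∈ cone F p}
        = if y ∈ Icc (0:ℝ) h then
            (fun w => (1 - y/h) • w + (y/h) • Fin.init p) '' F else ∅ := by
      intro y
      ext z
      simp only [Set.mem_setOf_eq]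
      rw [cone_mem_iff hFne hFconv]
      split_ifs with hy
      · constructor
        · rintro ⟨t, ⟨ht0, ht1⟩, w, hw, hrep⟩
          have hlast : y = t * h := by
            have := congrFun hrep (Fin.last m)
            simp only [Fin.snoc_last, Pi.add_apply, Pi.smul_apply, smul_eq_mul,
              Fin.snoc_last] at this
            rw [this, ← hdef]
            ring
          have ht : t = y / h := by rw [hlast]; field_simp
          refine ⟨w, hw, ?_⟩
          funext j
          have := congrFun hrep (Fin.castSucc j)
          simp only [Fin.snoc_castSucc, Pi.add_apply, Pi.smul_apply, smul_eq_mul] at this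
          simp only [Pi.add_apply, Pi.smul_apply, smul_eq_mul, Fin.init]
          rw [← ht, this]
          ring
        · rintro ⟨w, hw, rfl⟩
          have hy0 := hy.1
          have hy1 := hy.2
          refine ⟨y/h, ⟨by positivity, by rwa [div_le_one hpos]⟩, w, hw, ?_⟩
          funext i
          refine Fin.lastCases ?_ (fun j => ?_) i
          · simp only [Fin.snoc_last, Pi.add_apply, Pi.smul_apply, smul_eq_mul, Fin.snoc_last]
            field_simp
            rw [← hdef]; ring
          · simp only [Fin.snoc_castSucc, Pi.add_apply, Pi.smul_apply, smul_eq_mul,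
              Fin.snoc_castSucc, Fin.init]
            ring
      · simp only [Set.mem_empty_iff_false, iff_false]
        rintro ⟨t, ⟨ht0, ht1⟩, w, hw, hrep⟩
        apply hy
        have hlast : y = t * h := by
          have := congrFun hrep (Fin.last m)
          simp only [Fin.snoc_last, Pi.add_apply, Pi.smul_apply, smul_eq_mul,
            Fin.snoc_last] at this
          rw [this, ← hdef]
          ring
        constructor
        · rw [hlast]; positivity
        · rw [hlast]
          nlinarith
    calc ∫⁻ y : ℝ, volume {z : Fin m → ℝ | Fin.snoc z y ∈ cone F p}
        = ∫⁻ y : ℝ, (Icc (0:ℝ) h).indicator (fun y => ENNReal.ofReal ((1 - y/h)^m)) y := by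
          apply lintegral_congr
          intro y
          rw [hslice y]
          by_cases hy : y ∈ Icc (0:ℝ) h
          · rw [if_pos hy, Set.indicator_of_mem hy,
              vol_affine_image _ (by rw [sub_nonneg, div_le_one hpos]; exact hy.2) _ _, hFvol,
              mul_one]
          · rw [if_neg hy, Set.indicator_of_notMem hy, measure_empty]
      _ = ∫⁻ y in Icc (0:ℝ) h, ENNReal.ofReal ((1 - y/h)^m) :=
          lintegral_indicator measurableSet_Icc _
      _ = ENNReal.ofReal (h/(m+1)) := lint_Icc_pow hpos

end Aux5

namespace Aux6
open Aux Aux2 Aux3 Aux4 Aux5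
variable {m : ℕ} {F : Set (Fin m → ℝ)} {K : Set (Fin (m+1) → ℝ)}

lemma event_iff (hFne : F.Nonempty) (p q : Fin (m+1) → ℝ) :
    (p ∈ frontier (convexHull ℝ ({p, q} ∪ floorEmb m F)) ∧
     q ∈ frontier (convexHull ℝ ({p, q} ∪ floorEmb m F)))
    ↔ (p ∉ interior (cone F q) ∧ q ∉ interior (cone F p)) := by
  obtain ⟨v0, hv0⟩ : ∃ v0 : Fin (m+1) → ℝ, v0 ≠ 0 :=
    ⟨Pi.single (Fin.last m) 1, by
      intro h
      have := congrFun h (Fin.last m)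
      simp at this⟩
  have hU1 : ({p, q} ∪ floorEmb m F) = insert p (insert q (floorEmb m F)) := by
    rw [Set.insert_union, Set.singleton_union]
  have hU2 : ({p, q} ∪ floorEmb m F) = insert q (insert p (floorEmb m F)) := by
    rw [hU1, Set.insert_comm]
  have hfr : ∀ x, x ∈ convexHull ℝ ({p, q} ∪ floorEmb m F) →
      (x ∈ frontier (convexHull ℝ ({p, q} ∪ floorEmb m F)) ↔
        x ∉ interior (convexHull ℝ ({p, q} ∪ floorEmb m F))) := by
    intro x hx
    constructor
    · exact fun h => h.2
    · exact fun h => ⟨subset_closure hx, h⟩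
  have hp_mem : p ∈ convexHull ℝ ({p, q} ∪ floorEmb m F) :=
    subset_convexHull _ _ (by simp)
  have hq_mem : q ∈ convexHull ℝ ({p, q} ∪ floorEmb m F) :=
    subset_convexHull _ _ (by simp)
  have hp_iff : p ∈ interior (convexHull ℝ ({p, q} ∪ floorEmb m F)) ↔
      p ∈ interior (cone F q) := by
    rw [hU1]
    exact interior_convexHull_insert (insert_nonempty q _) v0 hv0 p
  have hq_iff : q ∈ interior (convexHull ℝ ({p, q} ∪ floorEmb m F)) ↔
      q ∈ interior (cone F p) := by
    rw [hU2]
    exact interior_convexHull_insert (insert_nonempty p _) v0 hv0 q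
  rw [hfr p hp_mem, hfr q hq_mem, hp_iff, hq_iff]

lemma lt_of_mem_interior_cone (hFne : F.Nonempty) (hFconv : Convex ℝ F)
    {p q : Fin (m+1) → ℝ} (hpl : 0 ≤ p (Fin.last m))
    (hq : q ∈ interior (cone F p)) : q (Fin.last m) < p (Fin.last m) := by
  obtain ⟨n, hn⟩ := (mem_interior_cone_iff hFne hFconv).1 hq
  set e : Fin (m+1) → ℝ := Pi.single (Fin.last m) 1 with he
  have hecoord : e (Fin.last m) = 1 := by rw [he, Pi.single_eq_same]
  have hnorm : ‖e‖ ≤ 1 := by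
    rw [pi_norm_le_iff_of_nonneg zero_le_one]
    intro i
    rw [he, Pi.single_apply]
    split_ifs <;> simp
  set v : Fin (m+1) → ℝ := (1/((n:ℝ)+1)) • e with hv
  have hvmem : v ∈ closedBall (0 : Fin (m+1) → ℝ) (1/(n+1)) := by
    rw [mem_closedBall, dist_eq_norm, sub_zero, hv, norm_smul]
    rw [Real.norm_eq_abs, abs_of_pos (by positivity)]
    calc 1/((n:ℝ)+1) * ‖e‖ ≤ 1/((n:ℝ)+1) * 1 := by
          apply mul_le_mul_of_nonneg_left hnorm (by positivity)
      _ = 1/((n:ℝ)+1) := mul_one _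
  have hmem := hn v hvmem
  have hle := cone_last_le hFne hFconv hpl hmem
  have hvl : (q + v) (Fin.last m) = q (Fin.last m) + 1/((n:ℝ)+1) := by
    rw [Pi.add_apply, hv, Pi.smul_apply, hecoord, smul_eq_mul, mul_one]
  rw [hvl] at hle
  have : (0:ℝ) < 1/((n:ℝ)+1) := by positivity
  linarith

end Aux6

namespace Aux7
open Aux Aux2 Aux3 Aux4 Aux5 Aux6
variable {m : ℕ} {F : Set (Fin m → ℝ)} {K : Set (Fin (m+1) → ℝ)}

/-- the vertical column of `K` over `z` -/
def col (K : Set (Fin (m+1) → ℝ)) (z : Fin m → ℝ) : Set ℝ := {y | Fin.snoc z y ∈ K}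

lemma cont_snoc_y (z : Fin m → ℝ) :
    Continuous fun y : ℝ => (Fin.snoc z y : Fin (m+1) → ℝ) := by
  apply continuous_pi
  intro i
  refine Fin.lastCases ?_ (fun j => ?_) i
  · simp; exact continuous_id
  · simpa using continuous_const

lemma col_closed (hK : IsClosed K) (z : Fin m → ℝ) : IsClosed (col K z) :=
  hK.preimage (cont_snoc_y z)

lemma col_convex (hK : Convex ℝ K) (z : Fin m → ℝ) : Convex ℝ (col K z) := by
  intro y1 h1 y2 h2 a b ha hb hab
  show Fin.snoc z (a • y1 + b • y2) ∈ K
  have hsnoc : (Fin.snoc z (a • y1 + b • y2) : Fin (m+1) → ℝ)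
      = a • (Fin.snoc z y1 : Fin (m+1) → ℝ) + b • (Fin.snoc z y2 : Fin (m+1) → ℝ) := by
    funext i
    refine Fin.lastCases ?_ (fun j => ?_) i
    · simp
    · simp only [Fin.snoc_castSucc, Pi.add_apply, Pi.smul_apply, smul_eq_mul]
      rw [← add_mul, hab, one_mul]
  rw [hsnoc]
  exact hK h1 h2 ha hb hab

lemma col_empty (hKsub : K ⊆ {x | Fin.init x ∈ F ∧ x (Fin.last m) ∈ Set.Icc 0 H})
    {z : Fin m → ℝ} (hz : z ∉ F) : col K z = ∅ := by
  rw [Set.eq_empty_iff_forall_notMem]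
  intro y hy
  have := (hKsub hy).1
  rw [Fin.init_snoc] at this
  exact hz this

section Col
variable {H : ℝ}
variable (hKconv : Convex ℝ K) (hKclosed : IsClosed K)
  (hfloor : K ⊆ {x | 0 ≤ x (Fin.last m)})
  (hF0K : floorEmb m F ⊆ K)
  (hKsub : K ⊆ {x | Fin.init x ∈ F ∧ x (Fin.last m) ∈ Set.Icc 0 H})
  {z : Fin m → ℝ} (hz : z ∈ F)

include hF0K hz in
lemma col_zero_mem : (0:ℝ) ∈ col K z := hF0K ⟨z, hz, rfl⟩

include hKsub in
lemma col_subset_Icc : col K z ⊆ Icc 0 H := by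
  intro y hy
  have := (hKsub hy).2
  rwa [Fin.snoc_last] at this

include hKsub in
lemma col_bddAbove : BddAbove (col K z) :=
  (bddAbove_Icc (a := (0:ℝ)) (b := H)).mono (col_subset_Icc hKsub)

include hKclosed hF0K hKsub hz in
lemma col_sSup_mem : sSup (col K z) ∈ col K z :=
  (col_closed hKclosed z).csSup_mem ⟨0, col_zero_mem hF0K hz⟩ (col_bddAbove hKsub)

include hF0K hz hKsub in
lemma col_sSup_nonneg : 0 ≤ sSup (col K z) :=
  le_csSup (col_bddAbove hKsub) (col_zero_mem hF0K hz)

include hF0K hz hKsub in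
lemma col_sSup_le : sSup (col K z) ≤ H :=
  csSup_le ⟨0, col_zero_mem hF0K hz⟩ (fun y hy => (col_subset_Icc hKsub hy).2)

include hKconv hKclosed hfloor hF0K hKsub hz in
lemma col_eq_Icc : col K z = Icc 0 (sSup (col K z)) := by
  apply Set.Subset.antisymm
  · intro y hy
    refine ⟨?_, le_csSup (col_bddAbove hKsub) hy⟩
    have := hfloor hy
    simp only [Set.mem_setOf_eq, Fin.snoc_last] at this
    exact this
  · have hOC : (col K z).OrdConnected := (col_convex hKconv z).ordConnected
    exact hOC.out (col_zero_mem hF0K hz) (col_sSup_mem hKclosed hF0K hKsub hz)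

end Col
end Aux7

namespace Aux8
open Aux Aux2 Aux3 Aux4 Aux5 Aux6 Aux7
variable {m : ℕ} {F : Set (Fin m → ℝ)} {K : Set (Fin (m+1) → ℝ)} {H : ℝ}

variable (hKconv : Convex ℝ K) (hKclosed : IsClosed K)
  (hfloor : K ⊆ {x | 0 ≤ x (Fin.last m)})
  (hF0K : floorEmb m F ⊆ K)
  (hKsub : K ⊆ {x | Fin.init x ∈ F ∧ x (Fin.last m) ∈ Set.Icc 0 H})
  (hFmeas : MeasurableSet F)

include hKconv hKclosed hfloor hF0K hKsub hFmeas in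
lemma T_eq :
    ∫⁻ x in K, ENNReal.ofReal (x (Fin.last m))
      = ∫⁻ z in F, ENNReal.ofReal ((sSup (col K z))^2/2) := by
  have hKmeas := hKclosed.measurableSet
  set f : (Fin (m+1) → ℝ) → ℝ≥0∞ := fun x => ENNReal.ofReal (x (Fin.last m)) with hfdef
  have hfmeas : Measurable f := ENNReal.measurable_ofReal.comp (measurable_pi_apply _)
  have hind : Measurable (K.indicator f) := hfmeas.indicator hKmeas
  calc ∫⁻ x in K, f x = ∫⁻ x, K.indicator f x := (lintegral_indicator hKmeas f).symm
    _ = ∫⁻ z : Fin m → ℝ, ∫⁻ y : ℝ, K.indicator f (Fin.snoc z y) := lintegral_snoc _ hind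
    _ = ∫⁻ z : Fin m → ℝ, F.indicator (fun z => ENNReal.ofReal ((sSup (col K z))^2/2)) z := by
        apply lintegral_congr
        intro z
        have hcol : ∀ y : ℝ, K.indicator f (Fin.snoc z y)
            = (col K z).indicator (fun y => ENNReal.ofReal y) y := by
          intro y
          by_cases hy : y ∈ col K z
          · rw [Set.indicator_of_mem hy, Set.indicator_of_mem (show Fin.snoc z y ∈ K from hy),
              hfdef]
            simp [Fin.snoc_last]
          · rw [Set.indicator_of_notMem hy,
              Set.indicator_of_notMem (show Fin.snoc z y ∉ K from hy)]
        simp_rw [hcol]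
        rw [lintegral_indicator (col_closed hKclosed z).measurableSet]
        by_cases hz : z ∈ F
        · rw [Set.indicator_of_mem hz]
          conv_lhs => rw [col_eq_Icc hKconv hKclosed hfloor hF0K hKsub hz]
          exact lint_Icc_id (col_sSup_nonneg hF0K hKsub hz)
        · rw [Set.indicator_of_notMem hz, col_empty hKsub hz]
          simp
    _ = ∫⁻ z in F, ENNReal.ofReal ((sSup (col K z))^2/2) := lintegral_indicator hFmeas _

include hKconv hKclosed hfloor hF0K hKsub hFmeas in
lemma G_aemeasurable :
    AEMeasurable (fun z => sSup (col K z)) (volume.restrict F) := by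
  have hKmeas := hKclosed.measurableSet
  have hg0 : Measurable fun z : Fin m → ℝ => (volume (col K z)).toReal :=
    (meas_column K hKmeas).ennreal_toReal
  apply hg0.aemeasurable.congr
  rw [Filter.EventuallyEq, ae_restrict_iff' hFmeas]
  apply ae_of_all
  intro z hz
  conv_lhs => rw [col_eq_Icc hKconv hKclosed hfloor hF0K hKsub hz]
  rw [Real.volume_Icc, sub_zero, ENNReal.toReal_ofReal (col_sSup_nonneg hF0K hKsub hz)]

include hKconv hKclosed hfloor hF0K hKsub hFmeas in
lemma J_eq (hH0 : 0 ≤ H) (hFvol : volume F = 1) :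
    ∫⁻ z in F, ENNReal.ofReal ((sSup (col K z))^2/2)
      = ENNReal.ofReal ((∫ z in F, (sSup (col K z))^2)/2) := by
  haveI : IsFiniteMeasure (volume.restrict F) :=
    ⟨by rw [Measure.restrict_apply_univ, hFvol]; exact ENNReal.one_lt_top⟩
  have hGae := G_aemeasurable hKconv hKclosed hfloor hF0K hKsub hFmeas
  have hfae : AEMeasurable (fun z => (sSup (col K z))^2/2) (volume.restrict F) :=
    ((hGae.mul hGae).div_const 2).congr (by
      apply ae_of_all
      intro z
      simp [sq])
  have hbound : ∀ᵐ z ∂(volume.restrict F), ‖(sSup (col K z))^2/2‖ ≤ H^2/2 := by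
    rw [ae_restrict_iff' hFmeas]
    apply ae_of_all
    intro z hz
    have h1 := col_sSup_nonneg hF0K hKsub hz
    have h2 := col_sSup_le hF0K hKsub hz
    rw [Real.norm_eq_abs, abs_of_nonneg (by positivity)]
    have : (sSup (col K z))^2 ≤ H^2 := by nlinarith
    linarith
  have hint : Integrable (fun z => (sSup (col K z))^2/2) (volume.restrict F) :=
    Integrable.mono' (integrable_const (H^2/2)) hfae.aestronglyMeasurable hbound
  have hnn : 0 ≤ᵐ[volume.restrict F] fun z => (sSup (col K z))^2/2 := by
    apply ae_of_all
    intro z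
    positivity
  rw [← ofReal_integral_eq_lintegral_ofReal hint hnn]
  congr 1
  rw [integral_div]

end Aux8

theorem stmt1 (m : ℕ) (hm : 1 ≤ m) (F : Set (Fin m → ℝ))
    (hFcomp : IsCompact F) (hFconv : Convex ℝ F) (hFvol : volume F = 1)
    (K : Set (Fin (m + 1) → ℝ)) (hKcomp : IsCompact K) (hKconv : Convex ℝ K)
    (hKfloor : HasFloor m F K) (hKvol : volume K = 1)
    (hKsub : IsSubPrism m F K) :
    Qtwo m F K =
      1 - (1 / ((m : ℝ) + 1)) * ∫ z in F, (sSup {y : ℝ | Fin.snoc z y ∈ K}) ^ 2 := by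
  classical
  obtain ⟨H, hH0, hKsubset⟩ := hKsub
  have hKclosed : IsClosed K := hKcomp.isClosed
  have hKmeas : MeasurableSet K := hKclosed.measurableSet
  have hFmeas : MeasurableSet F := hFcomp.isClosed.measurableSet
  have hFne : F.Nonempty := nonempty_of_measure_ne_zero (by rw [hFvol]; exact one_ne_zero)
  have hF0K : floorEmb m F ⊆ K := by
    rw [← hKfloor.2]; exact inter_subset_left
  have hfloor := hKfloor.1
  set μ2 := (volume.restrict K).prod (volume.restrict K) with hμ2
  -- the interior-membership event
  set IntSet : Set ((Fin (m+1) → ℝ) × (Fin (m+1) → ℝ)) :=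
    {pq | pq.2 ∈ interior (Aux.cone F pq.1)} with hIdef
  have hIntSet_meas : MeasurableSet IntSet := by
    have h : IntSet = ⋃ n : ℕ, Aux2.Cset F n := by
      ext pq
      simp only [hIdef, Set.mem_setOf_eq, Set.mem_iUnion]
      exact Aux2.mem_interior_cone_iff hFne hFconv
    rw [h]
    exact MeasurableSet.iUnion fun n => (Aux2.isClosed_Cset hFne hFconv hFcomp n).measurableSet
  set A := (K ×ˢ K) ∩ IntSet with hAdef
  set B := Prod.swap ⁻¹' A with hBdef
  have hKKmeas : MeasurableSet (K ×ˢ K) := hKmeas.prod hKmeas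
  have hAmeas : MeasurableSet A := hKKmeas.inter hIntSet_meas
  have hBmeas : MeasurableSet B := hAmeas.preimage measurable_swap
  have hAmem : ∀ pq : (Fin (m+1) → ℝ) × (Fin (m+1) → ℝ),
      pq ∈ A ↔ (pq.1 ∈ K ∧ pq.2 ∈ K) ∧ pq.2 ∈ interior (Aux.cone F pq.1) := by
    intro pq
    simp [hAdef, hIdef, Set.mem_prod]
  have hBmem : ∀ pq : (Fin (m+1) → ℝ) × (Fin (m+1) → ℝ),
      pq ∈ B ↔ (pq.1 ∈ K ∧ pq.2 ∈ K) ∧ pq.1 ∈ interior (Aux.cone F pq.2) := by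
    intro pq
    rw [hBdef, Set.mem_preimage, hAmem]
    simp only [Prod.fst_swap, Prod.snd_swap]
    tauto
  have hdisj : Disjoint A B := by
    rw [Set.disjoint_left]
    intro pq hA hB
    obtain ⟨⟨hp, hq⟩, hA2⟩ := (hAmem pq).1 hA
    obtain ⟨_, hB2⟩ := (hBmem pq).1 hB
    have h1 := Aux6.lt_of_mem_interior_cone hFne hFconv (hfloor hp) hA2
    have h2 := Aux6.lt_of_mem_interior_cone hFne hFconv (hfloor hq) hB2
    linarith
  -- the event set
  set Sset : Set ((Fin (m+1) → ℝ) × (Fin (m+1) → ℝ)) :=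
    {p : (Fin (m + 1) → ℝ) × (Fin (m + 1) → ℝ) |
      p.1 ∈ frontier (convexHull ℝ ({p.1, p.2} ∪ floorEmb m F)) ∧
      p.2 ∈ frontier (convexHull ℝ ({p.1, p.2} ∪ floorEmb m F))} with hSdef
  have h_event : Sset ∩ (K ×ˢ K) = (K ×ˢ K) \ (A ∪ B) := by
    ext pq
    simp only [hSdef, Set.mem_inter_iff, Set.mem_setOf_eq, Set.mem_diff, Set.mem_union,
      Set.mem_prod]
    constructor
    · rintro ⟨hev, hp, hq⟩
      have h2 := (Aux6.event_iff hFne pq.1 pq.2).1 hev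
      refine ⟨⟨hp, hq⟩, ?_⟩
      rintro (hA | hB)
      · exact h2.2 ((hAmem pq).1 hA).2
      · exact h2.1 ((hBmem pq).1 hB).2
    · rintro ⟨⟨hp, hq⟩, hnot⟩
      refine ⟨(Aux6.event_iff hFne pq.1 pq.2).2 ⟨?_, ?_⟩, hp, hq⟩
      · intro hc
        exact hnot (Or.inr ((hBmem pq).2 ⟨⟨hp, hq⟩, hc⟩))
      · intro hc
        exact hnot (Or.inl ((hAmem pq).2 ⟨⟨hp, hq⟩, hc⟩))
  have hμ2KK : μ2 (K ×ˢ K) = 1 := by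
    rw [hμ2, Measure.prod_prod, Measure.restrict_apply hKmeas, Set.inter_self, hKvol, one_mul]
  have hcompl : μ2 ((K ×ˢ K)ᶜ) = 0 := by
    have hKc : (volume.restrict K) Kᶜ = 0 := by
      rw [Measure.restrict_apply hKmeas.compl, Set.compl_inter_self, measure_empty]
    rw [Set.compl_prod_eq_union]
    apply le_antisymm _ zero_le
    calc μ2 ((Kᶜ ×ˢ univ) ∪ (univ ×ˢ Kᶜ))
        ≤ μ2 (Kᶜ ×ˢ univ) + μ2 (univ ×ˢ Kᶜ) := measure_union_le _ _
      _ = 0 := by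
          rw [hμ2, Measure.prod_prod, Measure.prod_prod, hKc, zero_mul, mul_zero, add_zero]
  have hSmeasure : μ2 Sset = μ2 ((K ×ˢ K) \ (A ∪ B)) := by
    apply le_antisymm
    · calc μ2 Sset ≤ μ2 (Sset ∩ (K ×ˢ K)) + μ2 (Sset \ (K ×ˢ K)) :=
            measure_le_inter_add_diff _ _ _
        _ ≤ μ2 ((K ×ˢ K) \ (A ∪ B)) + μ2 ((K ×ˢ K)ᶜ) := by
            apply add_le_add
            · rw [h_event]
            · exact measure_mono (Set.diff_subset_compl _ _)
        _ = μ2 ((K ×ˢ K) \ (A ∪ B)) := by rw [hcompl, add_zero]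
    · rw [← h_event]
      exact measure_mono Set.inter_subset_left
  -- the value of μ2 A
  have hJnn : (0:ℝ) ≤ ∫ z in F, (sSup {y : ℝ | Fin.snoc z y ∈ K}) ^ 2 :=
    setIntegral_nonneg hFmeas fun z _ => sq_nonneg _
  set J : ℝ := ∫ z in F, (sSup {y : ℝ | Fin.snoc z y ∈ K}) ^ 2 with hJdef
  have hsec : ∀ p ∈ K, (volume.restrict K) (Prod.mk p ⁻¹' A)
      = ENNReal.ofReal (p (Fin.last m)) * ENNReal.ofReal (1/((m:ℝ)+1)) := by
    intro p hp
    have hpl : 0 ≤ p (Fin.last m) := hfloor hp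
    have hconeK : Aux.cone F p ⊆ K := Aux.cone_subset hKconv hF0K hp
    have hsec_eq : Prod.mk p ⁻¹' A = interior (Aux.cone F p) := by
      ext q
      have : (p, q) ∈ A ↔ (p ∈ K ∧ q ∈ K) ∧ q ∈ interior (Aux.cone F p) := hAmem (p, q)
      rw [Set.mem_preimage, this]
      constructor
      · rintro ⟨_, h⟩; exact h
      · intro h; exact ⟨⟨hp, hconeK (interior_subset h)⟩, h⟩
    rw [hsec_eq, Measure.restrict_apply isOpen_interior.measurableSet,
      Set.inter_eq_left.2 (interior_subset.trans hconeK)]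
    have hfr : volume (frontier (Aux.cone F p)) = 0 :=
      Convex.addHaar_frontier volume (Aux.cone_convex p)
    have hint : volume (interior (Aux.cone F p)) = volume (Aux.cone F p) := by
      apply le_antisymm (measure_mono interior_subset)
      calc volume (Aux.cone F p)
          ≤ volume (interior (Aux.cone F p) ∪ frontier (Aux.cone F p)) := by
            apply measure_mono
            intro x hx
            by_cases hxi : x ∈ interior (Aux.cone F p)
            · exact Or.inl hxi
            · exact Or.inr ⟨subset_closure hx, hxi⟩
        _ ≤ volume (interior (Aux.cone F p)) + volume (frontier (Aux.cone F p)) :=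
            measure_union_le _ _
        _ = volume (interior (Aux.cone F p)) := by rw [hfr, add_zero]
    rw [hint, Aux5.vol_cone hFne hFconv hFcomp hFvol hpl, ← ENNReal.ofReal_mul hpl]
    congr 1
    ring
  have hmeasf : Measurable fun p : Fin (m+1) → ℝ => ENNReal.ofReal (p (Fin.last m)) :=
    ENNReal.measurable_ofReal.comp (measurable_pi_apply _)
  have hA_val : μ2 A = ENNReal.ofReal (J/2) * ENNReal.ofReal (1/((m:ℝ)+1)) := by
    rw [hμ2, Measure.prod_apply hAmeas]
    have hcong : ∫⁻ p, (volume.restrict K) (Prod.mk p ⁻¹' A) ∂(volume.restrict K)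
        = ∫⁻ p in K, ENNReal.ofReal (p (Fin.last m)) * ENNReal.ofReal (1/((m:ℝ)+1)) := by
      apply setLIntegral_congr_fun hKmeas
      exact hsec
    rw [hcong, lintegral_mul_const _ hmeasf]
    have hT : ∫⁻ p in K, ENNReal.ofReal (p (Fin.last m)) = ENNReal.ofReal (J/2) := by
      rw [Aux8.T_eq hKconv hKclosed hfloor hF0K hKsubset hFmeas,
        Aux8.J_eq hKconv hKclosed hfloor hF0K hKsubset hFmeas hH0 hFvol]
      rfl
    rw [hT]
  have hB_val : μ2 B = μ2 A := by
    calc μ2 B = Measure.map Prod.swap μ2 A := (Measure.map_apply measurable_swap hAmeas).symm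
      _ = μ2 A := by rw [hμ2, Measure.prod_swap]
  have hAB_val : μ2 (A ∪ B) = ENNReal.ofReal (J/((m:ℝ)+1)) := by
    rw [measure_union hdisj hBmeas, hB_val, hA_val,
      ← ENNReal.ofReal_mul (by positivity : (0:ℝ) ≤ J/2),
      ← ENNReal.ofReal_add (by positivity) (by positivity)]
    congr 1
    have hc : ((m:ℝ)+1) ≠ 0 := by positivity
    field_simp
    ring
  have hsub : A ∪ B ⊆ K ×ˢ K := by
    apply Set.union_subset Set.inter_subset_left
    intro pq h
    obtain ⟨⟨hp, hq⟩, _⟩ := (hBmem pq).1 h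
    exact ⟨hp, hq⟩
  have hle1 : μ2 (A ∪ B) ≤ 1 := hμ2KK ▸ measure_mono hsub
  have hdiff : μ2 ((K ×ˢ K) \ (A ∪ B)) = 1 - ENNReal.ofReal (J/((m:ℝ)+1)) := by
    rw [measure_diff hsub (hAmeas.union hBmeas).nullMeasurableSet
      (hle1.trans_lt ENNReal.one_lt_top).ne, hμ2KK, hAB_val]
  show (μ2 Sset).toReal = _
  rw [hSmeasure, hdiff]
  rw [ENNReal.toReal_sub_of_le (hAB_val ▸ hle1) ENNReal.one_ne_top]
  rw [ENNReal.toReal_one, ENNReal.toReal_ofReal (by positivity)]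
  rw [hJdef]
  ring
end
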